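/- arXiv:1711.00163 — 3 statements merged into one kernel-verified Lean document; each statement's English description precedes it below -/
import Mathlib

section
/- Let k be a field and n ≥ 1. Suppose ū₁, ū₂ ∈ M_n(k) are lower triangular with all diagonal entries 1, u₁, u₂ ∈ M_n(k) are upper triangular with all diagonal entries 1, and ĥ₁, ĥ₂ ∈ M_n(k) are diagonal matrices whose first n−1 diagonal entries are all nonzero and whose last diagonal entry is 0. If ū₁·ĥ₁·u₁ = ū₂·ĥ₂·u₂, then ū₁ = ū₂, ĥ₁ = ĥ₂, and u₁ = u₂. -/
theorem stmt2 (k : Type*) [Field k] (n : ℕ) (hn : 1 ≤ n)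
    (ub₁ ub₂ u₁ u₂ : Matrix (Fin n) (Fin n) k) (d₁ d₂ : Fin n → k)
    (hub₁lo : ∀ s t : Fin n, s < t → ub₁ s t = 0) (hub₁diag : ∀ s : Fin n, ub₁ s s = 1)
    (hub₂lo : ∀ s t : Fin n, s < t → ub₂ s t = 0) (hub₂diag : ∀ s : Fin n, ub₂ s s = 1)
    (hu₁up : ∀ s t : Fin n, t < s → u₁ s t = 0) (hu₁diag : ∀ s : Fin n, u₁ s s = 1)
    (hu₂up : ∀ s t : Fin n, t < s → u₂ s t = 0) (hu₂diag : ∀ s : Fin n, u₂ s s = 1)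
    (hd₁ : ∀ s : Fin n, (s : ℕ) < n - 1 → d₁ s ≠ 0) (hd₁0 : d₁ ⟨n - 1, by omega⟩ = 0)
    (hd₂ : ∀ s : Fin n, (s : ℕ) < n - 1 → d₂ s ≠ 0) (hd₂0 : d₂ ⟨n - 1, by omega⟩ = 0)
    (heq : ub₁ * Matrix.diagonal d₁ * u₁ = ub₂ * Matrix.diagonal d₂ * u₂) :
    ub₁ = ub₂ ∧ d₁ = d₂ ∧ u₁ = u₂ := by
  classical
  -- triangularity as BlockTriangular
  have hub₁bt : ub₁.BlockTriangular (OrderDual.toDual : Fin n → (Fin n)ᵒᵈ) :=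
    fun i j h => hub₁lo i j h
  have hub₂bt : ub₂.BlockTriangular (OrderDual.toDual : Fin n → (Fin n)ᵒᵈ) :=
    fun i j h => hub₂lo i j h
  have hu₁bt : u₁.BlockTriangular (id : Fin n → Fin n) := fun i j h => hu₁up i j h
  have hu₂bt : u₂.BlockTriangular (id : Fin n → Fin n) := fun i j h => hu₂up i j h
  -- invertibility
  have hdet₂ : ub₂.det = 1 := by
    rw [Matrix.det_of_lowerTriangular ub₂ hub₂bt]
    simp [hub₂diag]
  have hdetu₁ : u₁.det = 1 := by
    rw [Matrix.det_of_upperTriangular hu₁bt]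
    simp [hu₁diag]
  have hinv₂ : IsUnit ub₂.det := by rw [hdet₂]; exact isUnit_one
  have hinvu₁ : IsUnit u₁.det := by rw [hdetu₁]; exact isUnit_one
  haveI : Invertible ub₂ := ub₂.invertibleOfIsUnitDet hinv₂
  haveI : Invertible u₁ := u₁.invertibleOfIsUnitDet hinvu₁
  set L : Matrix (Fin n) (Fin n) k := ub₂⁻¹ * ub₁ with hL
  set U : Matrix (Fin n) (Fin n) k := u₂ * u₁⁻¹ with hU
  have hLbt : L.BlockTriangular (OrderDual.toDual : Fin n → (Fin n)ᵒᵈ) :=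
    (Matrix.blockTriangular_inv_of_blockTriangular hub₂bt).mul hub₁bt
  have hUbt : U.BlockTriangular (id : Fin n → Fin n) :=
    hu₂bt.mul (Matrix.blockTriangular_inv_of_blockTriangular hu₁bt)
  -- key equation
  have key : L * Matrix.diagonal d₁ = Matrix.diagonal d₂ * U := by
    have h1 : ub₂⁻¹ * (ub₁ * Matrix.diagonal d₁ * u₁) * u₁⁻¹
        = ub₂⁻¹ * (ub₂ * Matrix.diagonal d₂ * u₂) * u₁⁻¹ := by rw [heq]
    calc L * Matrix.diagonal d₁
        = ub₂⁻¹ * (ub₁ * Matrix.diagonal d₁ * u₁) * u₁⁻¹ := by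
          rw [hL]
          rw [Matrix.mul_assoc (ub₂⁻¹) _ _, Matrix.mul_assoc, Matrix.mul_assoc,
            Matrix.mul_nonsing_inv u₁ hinvu₁, Matrix.mul_one]
      _ = ub₂⁻¹ * (ub₂ * Matrix.diagonal d₂ * u₂) * u₁⁻¹ := h1
      _ = Matrix.diagonal d₂ * U := by
          rw [hU]
          rw [show ub₂ * Matrix.diagonal d₂ * u₂ = ub₂ * (Matrix.diagonal d₂ * u₂) from
            Matrix.mul_assoc _ _ _, ← Matrix.mul_assoc ub₂⁻¹,
            Matrix.nonsing_inv_mul ub₂ hinv₂, Matrix.one_mul, Matrix.mul_assoc]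
  have keyE : ∀ s t : Fin n, L s t * d₁ t = d₂ s * U s t := by
    intro s t
    have := congrFun (congrFun key s) t
    rwa [Matrix.mul_diagonal, Matrix.diagonal_mul] at this
  -- off-diagonal entries of L vanish
  have hLoff : ∀ s t : Fin n, s ≠ t → L s t = 0 := by
    intro s t hst
    rcases lt_or_gt_of_ne hst with h | h
    · exact hLbt h
    · -- t < s
      have hU0 : U s t = 0 := hUbt h
      have := keyE s t
      rw [hU0, mul_zero] at this
      have hd : d₁ t ≠ 0 := by
        apply hd₁
        have h1 : (t : ℕ) < (s : ℕ) := h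
        have h2 : (s : ℕ) < n := s.isLt
        omega
      exact (mul_eq_zero.mp this).resolve_right hd
  have hUoff : ∀ s t : Fin n, s ≠ t → U s t = 0 := by
    intro s t hst
    rcases lt_or_gt_of_ne hst with h | h
    · -- s < t
      have hL0 : L s t = 0 := hLbt h
      have := keyE s t
      rw [hL0, zero_mul] at this
      have hd : d₂ s ≠ 0 := by
        apply hd₂
        have h1 : (s : ℕ) < (t : ℕ) := h
        have h2 : (t : ℕ) < n := t.isLt
        omega
      exact ((mul_eq_zero.mp this.symm).resolve_left hd)
    · exact hUbt h
  -- diagonal entries of L are 1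
  have hub : ub₂ * L = ub₁ := by
    rw [hL, ← Matrix.mul_assoc, Matrix.mul_nonsing_inv ub₂ hinv₂, Matrix.one_mul]
  have hLdiag : ∀ s : Fin n, L s s = 1 := by
    intro s
    have h := congrFun (congrFun hub s) s
    rw [Matrix.mul_apply] at h
    rw [Finset.sum_eq_single s (fun j _ hj => by rw [hLoff j s hj, mul_zero])
      (fun hs => absurd (Finset.mem_univ s) hs)] at h
    rw [hub₂diag s, one_mul] at h
    rw [h, hub₁diag s]
  have hLone : L = 1 := by
    ext i j
    by_cases hij : i = j
    · subst hij; rw [hLdiag i, Matrix.one_apply_eq]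
    · rw [hLoff i j hij, Matrix.one_apply_ne hij]
  have huu : U * u₁ = u₂ := by
    rw [hU, Matrix.mul_assoc, Matrix.nonsing_inv_mul u₁ hinvu₁, Matrix.mul_one]
  have hUdiag : ∀ s : Fin n, U s s = 1 := by
    intro s
    have h := congrFun (congrFun huu s) s
    rw [Matrix.mul_apply] at h
    rw [Finset.sum_eq_single s (fun j _ hj => by rw [hUoff s j (Ne.symm hj), zero_mul])
      (fun hs => absurd (Finset.mem_univ s) hs)] at h
    rw [hu₁diag s, mul_one] at h
    rw [h, hu₂diag s]
  have hUone : U = 1 := by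
    ext i j
    by_cases hij : i = j
    · subst hij; rw [hUdiag i, Matrix.one_apply_eq]
    · rw [hUoff i j hij, Matrix.one_apply_ne hij]
  refine ⟨?_, ?_, ?_⟩
  · rw [← hub, hLone, Matrix.mul_one]
  · funext s
    have := keyE s s
    rw [hLdiag s, hUdiag s, one_mul, mul_one] at this
    exact this
  · rw [← huu, hUone, Matrix.one_mul]
end

section
/- With notation as in the context, assume the matrices a₂, a₄, …, a_{2r} are invertible. Then det N(b; a₁,…,a_{2r+1}; X, X', Y) = (−1)^{j·r} · det([ Y·b·X | Y·a₁·a₂^{-1}·a₃·a₄^{-1}·⋯·a_{2r−1}·a_{2r}^{-1}·a_{2r+1}·X' ]) · ∏_{s=1}^{r} det(a_{2s}), where [ A | B ] denotes the (i+j)×(i+j) matrix whose first i columns form the block A = Y·b·X and whose last j columns form the block B = Y·a₁·a₂^{-1}·a₃·⋯·a_{2r}^{-1}·a_{2r+1}·X'. -/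
section Aux
variable {k : Type*} [Field k] {l j : ℕ}

/-- Correction blocks for the `Fin r × Fin l` part of the column-operation matrix. -/
noncomputable def Kmat (a : ℕ → Matrix (Fin l) (Fin l) k) (s t : ℕ) : Matrix (Fin l) (Fin l) k :=
  if s = t then 1
  else if h : s < t then -((a (2*s+2))⁻¹ * (a (2*s+3) * Kmat a (s+1) t)) else 0
termination_by t - s
decreasing_by omega

lemma Kmat_self (a : ℕ → Matrix (Fin l) (Fin l) k) (s : ℕ) : Kmat a s s = 1 := by
  rw [Kmat.eq_def]; simp

lemma Kmat_lt (a : ℕ → Matrix (Fin l) (Fin l) k) {s t : ℕ} (h : t < s) : Kmat a s t = 0 := by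
  rw [Kmat.eq_def]; rw [if_neg (by omega), dif_neg (by omega)]

lemma Kmat_kill (a : ℕ → Matrix (Fin l) (Fin l) k) {s t : ℕ} (h : s < t)
    (hu : IsUnit (a (2*s+2)).det) :
    a (2*s+2) * Kmat a s t = -(a (2*s+3) * Kmat a (s+1) t) := by
  rw [Kmat.eq_def, if_neg (by omega), dif_pos h, Matrix.mul_neg,
    Matrix.mul_nonsing_inv_cancel_left _ _ hu]

/-- Correction blocks going into the `C₋ⱼ` column. -/
noncomputable def Hmat (a : ℕ → Matrix (Fin l) (Fin l) k) (X' : Matrix (Fin l) (Fin j) k)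
    (r s : ℕ) : Matrix (Fin l) (Fin j) k :=
  if h : s + 1 < r then -((a (2*s+2))⁻¹ * (a (2*s+3) * Hmat a X' r (s+1)))
  else -((a (2*s+2))⁻¹ * (a (2*r+1) * X'))
termination_by r - s
decreasing_by omega

lemma Hmat_kill₁ (a : ℕ → Matrix (Fin l) (Fin l) k) (X' : Matrix (Fin l) (Fin j) k) {r s : ℕ}
    (h : s + 1 < r) (hu : IsUnit (a (2*s+2)).det) :
    a (2*s+2) * Hmat a X' r s = -(a (2*s+3) * Hmat a X' r (s+1)) := by
  rw [Hmat.eq_def, dif_pos h, Matrix.mul_neg, Matrix.mul_nonsing_inv_cancel_left _ _ hu]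

lemma Hmat_kill₂ (a : ℕ → Matrix (Fin l) (Fin l) k) (X' : Matrix (Fin l) (Fin j) k) {r s : ℕ}
    (h : ¬ (s + 1 < r)) (hu : IsUnit (a (2*s+2)).det) :
    a (2*s+2) * Hmat a X' r s = -(a (2*r+1) * X') := by
  rw [Hmat.eq_def, dif_neg h, Matrix.mul_neg, Matrix.mul_nonsing_inv_cancel_left _ _ hu]

/-- The alternating product `a_{2s+1} a_{2s+2}⁻¹ ⋯ a_{2r-1} a_{2r}⁻¹ a_{2r+1}`. -/
noncomputable def Qmat (a : ℕ → Matrix (Fin l) (Fin l) k) (r s : ℕ) :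
    Matrix (Fin l) (Fin l) k :=
  if h : s + 1 < r then (a (2*s+1) * (a (2*s+2))⁻¹) * Qmat a r (s+1)
  else (a (2*s+1) * (a (2*s+2))⁻¹) * a (2*r+1)
termination_by r - s
decreasing_by omega

lemma aH_eq (a : ℕ → Matrix (Fin l) (Fin l) k) (X' : Matrix (Fin l) (Fin j) k) (r : ℕ) :
    ∀ n s, r - s = n → s < r →
      a (2*s+1) * Hmat a X' r s = ((-1:k)^(r-s)) • (Qmat a r s * X') := by
  intro n
  induction n with
  | zero => intro s h hs; omega
  | succ n ih =>
    intro s h hs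
    by_cases h1 : s + 1 < r
    · have hrec := ih (s+1) (by omega) h1
      have h23 : 2*s+3 = 2*(s+1)+1 := by omega
      have hQ : Qmat a r s = (a (2*s+1) * (a (2*s+2))⁻¹) * Qmat a r (s+1) := by
        rw [Qmat.eq_def]; rw [dif_pos h1]
      rw [Hmat.eq_def, dif_pos h1, Matrix.mul_neg, ← Matrix.mul_assoc, h23, hrec,
        Matrix.mul_smul, hQ, show r - s = (r - (s+1)) + 1 from by omega, pow_succ, ← neg_smul]
      simp only [Matrix.mul_assoc]
      congr 1
      ring
    · rw [Hmat.eq_def, dif_neg h1, Qmat.eq_def, dif_neg h1,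
        show r - s = 1 from by omega, pow_one, Matrix.mul_neg, neg_smul, one_smul]
      simp only [Matrix.mul_assoc]

lemma Qmat_eq_list (a : ℕ → Matrix (Fin l) (Fin l) k) (r : ℕ) :
    ∀ n s, r - s = n → s < r →
      Qmat a r s =
        (((List.range (r - s)).map fun u => a (2*(s+u)+1) * (a (2*(s+u)+2))⁻¹).prod)
          * a (2*r+1) := by
  intro n
  induction n with
  | zero => intro s h hs; omega
  | succ n ih =>
    intro s h hs
    by_cases h1 : s + 1 < r
    · rw [Qmat.eq_def, dif_pos h1, ih (s+1) (by omega) h1]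
      rw [show r - s = (r - (s+1)) + 1 from by omega, List.range_succ_eq_map, List.map_cons,
        List.prod_cons, List.map_map]
      have hfg : ((fun u => a (2*(s+u)+1) * (a (2*(s+u)+2))⁻¹) ∘ Nat.succ)
          = fun u => a (2*((s+1)+u)+1) * (a (2*((s+1)+u)+2))⁻¹ := by
        funext u
        simp only [Function.comp_apply, Nat.succ_eq_add_one,
          show s + (u+1) = (s+1)+u from by omega]
      rw [hfg]
      simp [Matrix.mul_assoc]
    · rw [Qmat.eq_def, dif_neg h1]
      rw [show r - s = 1 from by omega]
      simp [List.range_succ]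

lemma fin_sum_ite {M : Type*} [AddCommMonoid M] (r c : ℕ) (f : Fin r → M) :
    (∑ u : Fin r, if (u:ℕ) = c then f u else 0) = if h : c < r then f ⟨c, h⟩ else 0 := by
  split_ifs with h
  · rw [Finset.sum_eq_single (⟨c, h⟩ : Fin r)]
    · simp
    · intro u _ hu
      rw [if_neg (by simpa [Fin.ext_iff] using hu)]
    · simp
  · apply Finset.sum_eq_zero
    intro u _
    have := u.isLt
    rw [if_neg (by omega)]

end Aux

/-- The block matrix `N(b; a₁,…,a_{2r+1}; X, X', Y)`: rows are blocks `R₀` (size `i+j`) and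
`R₁,…,R_r` (size `l` each), columns are blocks `C₋ᵢ` (size `i`), `C₋ⱼ` (size `j`) and
`C₁,…,C_r` (size `l` each); the nonzero blocks are `(R₀,C₋ᵢ) = Y·b·X`, `(R₀,C₁) = Y·a₁`,
`(R_s,C_s) = a_{2s}`, `(R_s,C_{s+1}) = a_{2s+1}` and `(R_r,C₋ⱼ) = a_{2r+1}·X'`. -/
def NN (k : Type*) [Field k] (l r i j : ℕ)
    (b : Matrix (Fin l) (Fin l) k) (a : ℕ → Matrix (Fin l) (Fin l) k)
    (X : Matrix (Fin l) (Fin i) k) (X' : Matrix (Fin l) (Fin j) k)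
    (Y : Matrix (Fin i ⊕ Fin j) (Fin l) k) :
    Matrix ((Fin i ⊕ Fin j) ⊕ Fin r × Fin l) ((Fin i ⊕ Fin j) ⊕ Fin r × Fin l) k :=
  Matrix.of fun row col =>
    match row, col with
    | Sum.inl ρ, Sum.inl (Sum.inl ci) => (Y * b * X) ρ ci
    | Sum.inl _, Sum.inl (Sum.inr _) => 0
    | Sum.inl ρ, Sum.inr (s, q) => if (s : ℕ) = 0 then (Y * a 1) ρ q else 0
    | Sum.inr (_, _), Sum.inl (Sum.inl _) => 0
    | Sum.inr (s, p), Sum.inl (Sum.inr cj) =>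
        if (s : ℕ) = r - 1 then (a (2 * r + 1) * X') p cj else 0
    | Sum.inr (s, p), Sum.inr (t, q) =>
        if t = s then a (2 * (s : ℕ) + 2) p q
        else if (t : ℕ) = (s : ℕ) + 1 then a (2 * (s : ℕ) + 3) p q else 0

section Main
variable {k : Type*} [Field k]

/-- The unitriangular column-operation matrix. -/
noncomputable def Wmat (k : Type*) [Field k] (l r i j : ℕ)
    (a : ℕ → Matrix (Fin l) (Fin l) k) (X' : Matrix (Fin l) (Fin j) k) :
    Matrix ((Fin i ⊕ Fin j) ⊕ Fin r × Fin l) ((Fin i ⊕ Fin j) ⊕ Fin r × Fin l) k :=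
  Matrix.of fun row col =>
    match row, col with
    | Sum.inl ρ, Sum.inl σ => if ρ = σ then 1 else 0
    | Sum.inl _, Sum.inr _ => 0
    | Sum.inr _, Sum.inl (Sum.inl _) => 0
    | Sum.inr (s, p), Sum.inl (Sum.inr cj) => Hmat a X' r (s : ℕ) p cj
    | Sum.inr (s, p), Sum.inr (t, q) => Kmat a (s : ℕ) (t : ℕ) p q

/-- The result of the column operations: a block-triangular matrix. -/
noncomputable def Mmat (k : Type*) [Field k] (l r i j : ℕ)
    (b : Matrix (Fin l) (Fin l) k) (a : ℕ → Matrix (Fin l) (Fin l) k)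
    (X : Matrix (Fin l) (Fin i) k) (X' : Matrix (Fin l) (Fin j) k)
    (Y : Matrix (Fin i ⊕ Fin j) (Fin l) k) :
    Matrix ((Fin i ⊕ Fin j) ⊕ Fin r × Fin l) ((Fin i ⊕ Fin j) ⊕ Fin r × Fin l) k :=
  Matrix.of fun row col =>
    match row, col with
    | Sum.inl ρ, Sum.inl (Sum.inl ci) => (Y * b * X) ρ ci
    | Sum.inl ρ, Sum.inl (Sum.inr cj) => ((Y * a 1) * Hmat a X' r 0) ρ cj
    | Sum.inl ρ, Sum.inr (t, q) => ((Y * a 1) * Kmat a 0 (t : ℕ)) ρ q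
    | Sum.inr _, Sum.inl _ => 0
    | Sum.inr (s, p), Sum.inr (t, q) => if t = s then a (2 * (s : ℕ) + 2) p q else 0

lemma NW_eq (l r i j : ℕ) (hr : 1 ≤ r)
    (b : Matrix (Fin l) (Fin l) k) (a : ℕ → Matrix (Fin l) (Fin l) k)
    (X : Matrix (Fin l) (Fin i) k) (X' : Matrix (Fin l) (Fin j) k)
    (Y : Matrix (Fin i ⊕ Fin j) (Fin l) k)
    (hinv : ∀ s : ℕ, 1 ≤ s → s ≤ r → IsUnit (a (2 * s)).det) :
    NN k l r i j b a X X' Y * Wmat k l r i j a X' = Mmat k l r i j b a X X' Y := by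
  have hunit : ∀ s : ℕ, s < r → IsUnit (a (2 * s + 2)).det := by
    intro s hs
    have := hinv (s + 1) (by omega) (by omega)
    rwa [show 2 * (s + 1) = 2 * s + 2 from by ring] at this
  ext x y
  rw [Matrix.mul_apply, Fintype.sum_sum_type]
  cases x with
  | inl ρ =>
    cases y with
    | inl cc =>
      cases cc with
      | inl ci =>
        simp [NN, Wmat, Mmat, Fintype.sum_sum_type, Fintype.sum_prod_type,
          mul_ite, ite_mul, Finset.sum_ite_eq, Finset.sum_ite_eq']
      | inr cj =>
        rw [Fintype.sum_prod_type]
        have key : ∀ s : Fin r,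
            (∑ p, NN k l r i j b a X X' Y (Sum.inl ρ) (Sum.inr (s, p)) *
              Wmat k l r i j a X' (Sum.inr (s, p)) (Sum.inl (Sum.inr cj)))
            = if (s : ℕ) = 0 then ((Y * a 1) * Hmat a X' r 0) ρ cj else 0 := by
          intro s
          by_cases hs : (s : ℕ) = 0
          · simp only [NN, Wmat, Matrix.of_apply, hs, if_true, Matrix.mul_apply]
          · simp [NN, Wmat, hs]
        rw [Finset.sum_congr rfl fun s _ => key s, fin_sum_ite r 0 _,
          dif_pos (by omega : 0 < r)]
        simp [NN, Wmat, Mmat, Fintype.sum_sum_type]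
    | inr tq =>
      obtain ⟨t, q⟩ := tq
      rw [Fintype.sum_prod_type]
      have key : ∀ s : Fin r,
          (∑ p, NN k l r i j b a X X' Y (Sum.inl ρ) (Sum.inr (s, p)) *
            Wmat k l r i j a X' (Sum.inr (s, p)) (Sum.inr (t, q)))
          = if (s : ℕ) = 0 then ((Y * a 1) * Kmat a 0 (t : ℕ)) ρ q else 0 := by
        intro s
        by_cases hs : (s : ℕ) = 0
        · simp only [NN, Wmat, Matrix.of_apply, hs, if_true, Matrix.mul_apply]
        · simp [NN, Wmat, hs]
      rw [Finset.sum_congr rfl fun s _ => key s, fin_sum_ite r 0 _,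
        dif_pos (by omega : 0 < r)]
      simp [NN, Wmat, Mmat, Fintype.sum_sum_type]
  | inr sp =>
    obtain ⟨s, p⟩ := sp
    rw [Fintype.sum_prod_type]
    cases y with
    | inl cc =>
      cases cc with
      | inl ci =>
        simp [NN, Wmat, Mmat, Fintype.sum_sum_type]
      | inr cj =>
        have key : ∀ u : Fin r,
            (∑ p', NN k l r i j b a X X' Y (Sum.inr (s, p)) (Sum.inr (u, p')) *
              Wmat k l r i j a X' (Sum.inr (u, p')) (Sum.inl (Sum.inr cj)))
            = (if u = s then (a (2*(s:ℕ)+2) * Hmat a X' r (s:ℕ)) p cj else 0)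
            + (if (u:ℕ) = (s:ℕ)+1 then (a (2*(s:ℕ)+3) * Hmat a X' r ((s:ℕ)+1)) p cj else 0) := by
          intro u
          by_cases h1 : u = s
          · subst h1
            rw [if_pos rfl, if_neg (by omega : ¬((u:ℕ) = (u:ℕ)+1)), add_zero, Matrix.mul_apply]
            apply Finset.sum_congr rfl
            intro p' _
            simp [NN, Wmat]
          · by_cases h2 : (u:ℕ) = (s:ℕ)+1
            · rw [if_neg h1, if_pos h2, zero_add, Matrix.mul_apply]
              apply Finset.sum_congr rfl
              intro p' _
              simp [NN, Wmat, h1, h2]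
            · simp [NN, Wmat, h1, h2]
        rw [Finset.sum_congr rfl fun u _ => key u, Finset.sum_add_distrib,
          Finset.sum_ite_eq' Finset.univ s _, if_pos (Finset.mem_univ s),
          fin_sum_ite r ((s:ℕ)+1) _]
        have sum1 : (∑ σ : Fin i ⊕ Fin j,
            NN k l r i j b a X X' Y (Sum.inr (s, p)) (Sum.inl σ) *
              Wmat k l r i j a X' (Sum.inl σ) (Sum.inl (Sum.inr cj)))
            = if (s:ℕ) = r - 1 then (a (2*r+1) * X') p cj else 0 := by
          simp [NN, Wmat, Fintype.sum_sum_type, ite_mul, mul_ite,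
            Finset.sum_ite_eq, Finset.sum_ite_eq']
        rw [sum1]
        by_cases hcase : (s:ℕ) + 1 < r
        · rw [dif_pos hcase, if_neg (by omega),
            Hmat_kill₁ a X' hcase (hunit _ s.isLt)]
          simp [Mmat]
        · rw [dif_neg hcase, if_pos (by have := s.isLt; omega),
            Hmat_kill₂ a X' hcase (hunit _ s.isLt), add_zero]
          simp [Mmat]
    | inr tq =>
      obtain ⟨t, q⟩ := tq
      have key : ∀ u : Fin r,
          (∑ p', NN k l r i j b a X X' Y (Sum.inr (s, p)) (Sum.inr (u, p')) *
            Wmat k l r i j a X' (Sum.inr (u, p')) (Sum.inr (t, q)))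
          = (if u = s then (a (2*(s:ℕ)+2) * Kmat a (s:ℕ) (t:ℕ)) p q else 0)
          + (if (u:ℕ) = (s:ℕ)+1 then (a (2*(s:ℕ)+3) * Kmat a ((s:ℕ)+1) (t:ℕ)) p q else 0) := by
        intro u
        by_cases h1 : u = s
        · subst h1
          rw [if_pos rfl, if_neg (by omega : ¬((u:ℕ) = (u:ℕ)+1)), add_zero, Matrix.mul_apply]
          apply Finset.sum_congr rfl
          intro p' _
          simp [NN, Wmat]
        · by_cases h2 : (u:ℕ) = (s:ℕ)+1
          · rw [if_neg h1, if_pos h2, zero_add, Matrix.mul_apply]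
            apply Finset.sum_congr rfl
            intro p' _
            simp [NN, Wmat, h1, h2]
          · simp [NN, Wmat, h1, h2]
      rw [Finset.sum_congr rfl fun u _ => key u, Finset.sum_add_distrib,
        Finset.sum_ite_eq' Finset.univ s _, if_pos (Finset.mem_univ s),
        fin_sum_ite r ((s:ℕ)+1) _]
      have sum1 : (∑ σ : Fin i ⊕ Fin j,
          NN k l r i j b a X X' Y (Sum.inr (s, p)) (Sum.inl σ) *
            Wmat k l r i j a X' (Sum.inl σ) (Sum.inr (t, q)))
          = 0 := by
        simp [NN, Wmat, Fintype.sum_sum_type]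
      rw [sum1, zero_add]
      by_cases hcase : (s:ℕ) + 1 < r
      · rw [dif_pos hcase]
        rcases lt_trichotomy (t:ℕ) (s:ℕ) with hlt | heq | hgt
        · rw [Kmat_lt a hlt, Kmat_lt a (by omega : (t:ℕ) < (s:ℕ)+1)]
          simp [Mmat, Fin.ext_iff]
          exact fun h => absurd h (by omega)
        · have : t = s := Fin.ext heq
          subst this
          rw [Kmat_self, Kmat_lt a (by omega : (t:ℕ) < (t:ℕ)+1)]
          simp [Mmat]
        · rw [Kmat_kill a hgt (hunit _ s.isLt)]
          simp [Mmat, Fin.ext_iff]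
          exact fun h => absurd h (by omega)
      · rw [dif_neg hcase]
        rcases lt_trichotomy (t:ℕ) (s:ℕ) with hlt | heq | hgt
        · rw [Kmat_lt a hlt]
          simp [Mmat, Fin.ext_iff]
          exact fun h => absurd h (by omega)
        · have : t = s := Fin.ext heq
          subst this
          rw [Kmat_self]
          simp [Mmat]
        · exact absurd t.isLt (by omega)

end Main

section Det
variable {k : Type*} [Field k]

/-- Weight function exhibiting `Mmat` as block triangular. -/
def wt (l r i j : ℕ) : (Fin i ⊕ Fin j) ⊕ Fin r × Fin l → ℕ :=
  Sum.elim (fun _ => 0) (fun sp => (sp.1 : ℕ) + 1)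

/-- Weight function exhibiting `Wmat` as block triangular. -/
def wt' (l r i j : ℕ) : (Fin i ⊕ Fin j) ⊕ Fin r × Fin l → ℕ :=
  Sum.elim (fun _ => r) (fun sp => (sp.1 : ℕ))

lemma Wmat_blockTriangular (l r i j : ℕ) (a : ℕ → Matrix (Fin l) (Fin l) k)
    (X' : Matrix (Fin l) (Fin j) k) :
    (Wmat k l r i j a X').BlockTriangular (wt' l r i j) := by
  rintro x y hxy
  cases x with
  | inl ρ =>
    cases y with
    | inl σ => simp [wt'] at hxy
    | inr tq => obtain ⟨t, q⟩ := tq; simp [Wmat]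
  | inr sp =>
    obtain ⟨s, p⟩ := sp
    cases y with
    | inl σ =>
      exact absurd hxy (by simp only [wt', Sum.elim_inl, Sum.elim_inr]; have := s.isLt; omega)
    | inr tq =>
      obtain ⟨t, q⟩ := tq
      simp only [wt', Sum.elim_inr] at hxy
      show Kmat a (s : ℕ) (t : ℕ) p q = 0
      rw [Kmat_lt a hxy]
      rfl

lemma Wmat_det (l r i j : ℕ) (a : ℕ → Matrix (Fin l) (Fin l) k)
    (X' : Matrix (Fin l) (Fin j) k) :
    (Wmat k l r i j a X' : Matrix ((Fin i ⊕ Fin j) ⊕ Fin r × Fin l) _ k).det = 1 := by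
  rw [(Wmat_blockTriangular l r i j a X').det]
  apply Finset.prod_eq_one
  intro v _
  have hone : (Wmat k l r i j a X').toSquareBlock (wt' l r i j) v = 1 := by
    ext x y
    obtain ⟨x, hx⟩ := x
    obtain ⟨y, hy⟩ := y
    cases x with
    | inl ρ =>
      cases y with
      | inl σ =>
        simp [Matrix.toSquareBlock_def, Wmat, Matrix.one_apply, Subtype.ext_iff]
      | inr tq =>
        obtain ⟨t, q⟩ := tq
        simp [Matrix.toSquareBlock_def, Wmat, Matrix.one_apply, Subtype.ext_iff]
    | inr sp =>
      obtain ⟨s, p⟩ := sp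
      cases y with
      | inl σ =>
        exfalso
        have := s.isLt
        simp [wt'] at hx hy
        omega
      | inr tq =>
        obtain ⟨t, q⟩ := tq
        have hts : t = s := by
          simp [wt'] at hx hy
          exact Fin.ext (by omega)
        subst hts
        simp [Matrix.toSquareBlock_def, Wmat, Matrix.one_apply, Subtype.ext_iff,
          Kmat_self, Prod.ext_iff]
  rw [hone, Matrix.det_one]

lemma Mmat_blockTriangular (l r i j : ℕ)
    (b : Matrix (Fin l) (Fin l) k) (a : ℕ → Matrix (Fin l) (Fin l) k)
    (X : Matrix (Fin l) (Fin i) k) (X' : Matrix (Fin l) (Fin j) k)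
    (Y : Matrix (Fin i ⊕ Fin j) (Fin l) k) :
    (Mmat k l r i j b a X X' Y).BlockTriangular (wt l r i j) := by
  rintro x y hxy
  cases x with
  | inl ρ => simp [wt] at hxy
  | inr sp =>
    obtain ⟨s, p⟩ := sp
    cases y with
    | inl σ => cases σ <;> simp [Mmat]
    | inr tq =>
      obtain ⟨t, q⟩ := tq
      simp only [wt, Sum.elim_inr] at hxy
      simp only [Mmat, Matrix.of_apply]
      rw [if_neg (by intro h; subst h; omega)]

/-- Reindexing of the top-left diagonal block. -/
def eZero (l r i j : ℕ) (hi : 0 < i) :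
    (Fin i ⊕ Fin j) ≃ {x : (Fin i ⊕ Fin j) ⊕ Fin r × Fin l // wt l r i j x = 0} where
  toFun ρ := ⟨Sum.inl ρ, rfl⟩
  invFun x := Sum.elim id (fun _ => Sum.inl ⟨0, hi⟩) x.1
  left_inv ρ := rfl
  right_inv := by
    rintro ⟨x, hx⟩
    cases x with
    | inl ρ => rfl
    | inr sp => exact absurd hx (by simp [wt])

/-- Reindexing of the lower diagonal blocks. -/
def eBlk (l r i j : ℕ) (hl : 0 < l) (s : ℕ) (hs : s < r) :
    Fin l ≃ {x : (Fin i ⊕ Fin j) ⊕ Fin r × Fin l // wt l r i j x = s + 1} where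
  toFun p := ⟨Sum.inr (⟨s, hs⟩, p), rfl⟩
  invFun x := Sum.elim (fun _ => (⟨0, hl⟩ : Fin l)) (fun sp : Fin r × Fin l => sp.2) x.1
  left_inv p := rfl
  right_inv := by
    rintro ⟨x, hx⟩
    cases x with
    | inl ρ => exact absurd hx (by simp [wt])
    | inr sp =>
      obtain ⟨t, p⟩ := sp
      simp only [wt, Sum.elim_inr] at hx
      apply Subtype.ext
      simp only [Sum.elim_inr]
      have hts : (⟨s, hs⟩ : Fin r) = t := by
        apply Fin.ext
        simp only [Fin.val_mk]
        omega
      rw [hts]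

end Det

theorem stmt7 (k : Type*) [Field k] (l r i j : ℕ)
    (hl : 1 ≤ l) (hr : 1 ≤ r) (hi : 1 ≤ i) (hj : 1 ≤ j)
    (b : Matrix (Fin l) (Fin l) k) (a : ℕ → Matrix (Fin l) (Fin l) k)
    (X : Matrix (Fin l) (Fin i) k) (X' : Matrix (Fin l) (Fin j) k)
    (Y : Matrix (Fin i ⊕ Fin j) (Fin l) k)
    (hinv : ∀ s : ℕ, 1 ≤ s → s ≤ r → IsUnit (a (2 * s)).det) :
    (NN k l r i j b a X X' Y).det =
      (-1 : k) ^ (j * r) *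
        (Matrix.of fun (ρ c : Fin i ⊕ Fin j) =>
          Sum.elim ((Y * b * X) ρ)
            ((Y * (((List.range r).map fun s => a (2 * s + 1) * (a (2 * s + 2))⁻¹).prod *
                a (2 * r + 1)) * X') ρ) c).det *
        ∏ s ∈ Finset.range r, (a (2 * s + 2)).det := by
  have hdet : (NN k l r i j b a X X' Y).det = (Mmat k l r i j b a X X' Y).det := by
    rw [← NW_eq l r i j hr b a X X' Y hinv, Matrix.det_mul, Wmat_det, mul_one]
  rw [hdet, (Mmat_blockTriangular l r i j b a X X' Y).det]
  have himg : Finset.univ.image (wt l r i j) = Finset.range (r + 1) := by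
    ext v
    simp only [Finset.mem_image, Finset.mem_range, Finset.mem_univ, true_and]
    constructor
    · rintro ⟨x, rfl⟩
      cases x with
      | inl ρ => simp [wt]
      | inr sp =>
        simp only [wt, Sum.elim_inr]
        exact Nat.succ_lt_succ sp.1.isLt
    · intro hv
      cases v with
      | zero => exact ⟨Sum.inl (Sum.inl ⟨0, hi⟩), rfl⟩
      | succ u => exact ⟨Sum.inr (⟨u, by omega⟩, ⟨0, hl⟩), rfl⟩
  rw [himg, Finset.prod_range_succ']
  have hblk : ∀ s ∈ Finset.range r,
      ((Mmat k l r i j b a X X' Y).toSquareBlock (wt l r i j) (s + 1)).det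
        = (a (2 * s + 2)).det := by
    intro s hs
    rw [Finset.mem_range] at hs
    rw [← Matrix.det_submatrix_equiv_self (eBlk l r i j hl s hs)]
    congr 1
    ext p q
    simp [Matrix.toSquareBlock_def, eBlk, Mmat]
    show (if (⟨s, hs⟩ : Fin r) = ⟨s, hs⟩ then a (2 * s + 2) p q else 0) = a (2 * s + 2) p q
    rw [if_pos rfl]
  have h0 : ((Mmat k l r i j b a X X' Y).toSquareBlock (wt l r i j) 0).det
      = (-1 : k) ^ (j * r) *
        (Matrix.of fun (ρ c : Fin i ⊕ Fin j) =>
          Sum.elim ((Y * b * X) ρ)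
            ((Y * (((List.range r).map fun s => a (2 * s + 1) * (a (2 * s + 2))⁻¹).prod *
                a (2 * r + 1)) * X') ρ) c).det := by
    have h1 : a 1 * Hmat a X' r 0 = ((-1 : k) ^ r) • (Qmat a r 0 * X') := by
      have := aH_eq a X' r r 0 rfl (by omega)
      simpa using this
    have h2 : Qmat a r 0
        = ((List.range r).map fun s => a (2 * s + 1) * (a (2 * s + 2))⁻¹).prod
            * a (2 * r + 1) := by
      have := Qmat_eq_list a r r 0 rfl (by omega)
      simpa using this
    have hH : (Y * a 1) * Hmat a X' r 0
        = ((-1 : k) ^ r) •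
          (Y * ((((List.range r).map fun s => a (2 * s + 1) * (a (2 * s + 2))⁻¹).prod
            * a (2 * r + 1)) * X')) := by
      rw [Matrix.mul_assoc, h1, h2, Matrix.mul_smul]
    rw [← Matrix.det_submatrix_equiv_self (eZero l r i j hi)]
    have hsub : ((Mmat k l r i j b a X X' Y).toSquareBlock (wt l r i j) 0).submatrix
          (eZero l r i j hi) (eZero l r i j hi)
        = (Matrix.of fun (ρ c : Fin i ⊕ Fin j) =>
            Sum.elim ((Y * b * X) ρ)
              ((Y * (((List.range r).map fun s => a (2 * s + 1) * (a (2 * s + 2))⁻¹).prod *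
                  a (2 * r + 1)) * X') ρ) c)
          * Matrix.diagonal (Sum.elim (fun _ : Fin i => (1 : k)) fun _ : Fin j => (-1 : k) ^ r) := by
      ext ρ σ
      rw [Matrix.mul_diagonal]
      cases σ with
      | inl ci => simp [Matrix.toSquareBlock_def, eZero, Mmat]; rfl
      | inr cj =>
        show ((Y * a 1) * Hmat a X' r 0) ρ cj = _
        rw [hH]
        simp [← Matrix.mul_assoc, mul_comm]
    rw [hsub, Matrix.det_mul, Matrix.det_diagonal, Fintype.prod_sum_type]
    simp only [Sum.elim_inl, Sum.elim_inr, Finset.prod_const, Finset.card_univ,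
      Fintype.card_fin, one_pow, one_mul]
    rw [← pow_mul, Nat.mul_comm r j, mul_comm]
  rw [Finset.prod_congr rfl hblk, h0]
  ring
end

section
/- With notation as in the context, assume additionally that j ≤ l (no invertibility assumptions on the matrices are needed), and let t, t₁, …, t_{2r+1} be scalars in k. Then det N(t·b; t₁·a₁, t₂·a₂, …, t_{2r+1}·a_{2r+1}; X, X', Y) = tⁱ · (∏_{s=0}^{r} t_{2s+1}ʲ) · (∏_{s=1}^{r} t_{2s}^{l−j}) · det N(b; a₁,…,a_{2r+1}; X, X', Y); that is, det N is multihomogeneous in (b, a₁, a₂, …, a_{2r+1}) of multidegree (i, j, l−j, j, l−j, …, l−j, j). -/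
/-- The entrywise scaling factors. -/
def ccc {l r i j : ℕ} {k : Type*} [Field k] (t : k) (ts : ℕ → k) :
    ((Fin i ⊕ Fin j) ⊕ Fin r × Fin l) → ((Fin i ⊕ Fin j) ⊕ Fin r × Fin l) → k
  | _, Sum.inl (Sum.inl _) => t
  | _, Sum.inl (Sum.inr _) => ts (2 * r + 1)
  | Sum.inl _, Sum.inr (s, _) => ts (2 * (s : ℕ) + 1)
  | Sum.inr (u, _), Sum.inr (s, _) =>
      if u = s then ts (2 * (s : ℕ) + 2) else ts (2 * (s : ℕ) + 1)

/-- Row-block index: `0` for the `R₀` block, `u+1` for block `R_{u+1}`. -/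
def rIdx {l r i j : ℕ} : ((Fin i ⊕ Fin j) ⊕ Fin r × Fin l) → ℕ
  | Sum.inl _ => 0
  | Sum.inr (u, _) => (u : ℕ) + 1

lemma ccc_inl_inl {l r i j : ℕ} {k : Type*} [Field k] (t : k) (ts : ℕ → k)
    (x : (Fin i ⊕ Fin j) ⊕ Fin r × Fin l) (ci : Fin i) :
    ccc t ts x (Sum.inl (Sum.inl ci)) = t := by
  rcases x with (y | ⟨u, p⟩) <;> rfl

lemma ccc_inl_inr {l r i j : ℕ} {k : Type*} [Field k] (t : k) (ts : ℕ → k)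
    (x : (Fin i ⊕ Fin j) ⊕ Fin r × Fin l) (cj : Fin j) :
    ccc t ts x (Sum.inl (Sum.inr cj)) = ts (2 * r + 1) := by
  rcases x with (y | ⟨u, p⟩) <;> rfl

lemma ccc_inr {l r i j : ℕ} {k : Type*} [Field k] (t : k) (ts : ℕ → k)
    (x : (Fin i ⊕ Fin j) ⊕ Fin r × Fin l) (s : Fin r) (q : Fin l) :
    ccc t ts x (Sum.inr (s, q)) =
      if rIdx x = (s : ℕ) + 1 then ts (2 * (s : ℕ) + 2) else ts (2 * (s : ℕ) + 1) := by
  rcases x with (y | ⟨u, p⟩)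
  · simp [ccc, rIdx]
  · simp only [ccc]
    rw [show rIdx (Sum.inr (u, p) : (Fin i ⊕ Fin j) ⊕ Fin r × Fin l) = (u : ℕ) + 1 from rfl]
    by_cases h : u = s
    · simp [h]
    · rw [if_neg h, if_neg]
      intro hv
      exact h (Fin.ext (by omega))

lemma NN_smul_entry (k : Type*) [Field k] (l r i j : ℕ)
    (b : Matrix (Fin l) (Fin l) k) (a : ℕ → Matrix (Fin l) (Fin l) k)
    (X : Matrix (Fin l) (Fin i) k) (X' : Matrix (Fin l) (Fin j) k)
    (Y : Matrix (Fin i ⊕ Fin j) (Fin l) k) (t : k) (ts : ℕ → k)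
    (x y : (Fin i ⊕ Fin j) ⊕ Fin r × Fin l) :
    NN k l r i j (t • b) (fun q => ts q • a q) X X' Y x y
      = ccc t ts x y * NN k l r i j b a X X' Y x y := by
  rcases x with (ρ | ⟨u, p⟩) <;> rcases y with ((ci | cj) | ⟨s, q⟩)
  · simp [NN, ccc, Matrix.mul_smul, Matrix.smul_mul]
  · simp [NN, ccc]
  · simp only [NN, ccc, Matrix.of_apply]
    by_cases h : (s : ℕ) = 0
    · simp [h, Matrix.mul_smul]
    · simp [h]
  · simp [NN, ccc]
  · simp only [NN, ccc, Matrix.of_apply]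
    by_cases h : (u : ℕ) = r - 1
    · simp [h, Matrix.smul_mul]
    · simp [h]
  · simp only [NN, ccc, Matrix.of_apply]
    by_cases h : s = u
    · subst h
      simp [Matrix.smul_apply]
    · have h' : ¬u = s := fun e => h e.symm
      by_cases h2 : (s : ℕ) = (u : ℕ) + 1
      · rw [if_neg h, if_pos h2, if_neg h', if_neg h, if_pos h2, Matrix.smul_apply,
          smul_eq_mul, show 2 * (s : ℕ) + 1 = 2 * (u : ℕ) + 3 from by omega]
      · simp [h, h2, h']

open Finset in
lemma prod_ite_count {α : Type*} [Fintype α] {k : Type*} [CommRing k]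
    (P : α → Prop) [DecidablePred P] (A B : k) :
    (∏ x, if P x then A else B)
      = A ^ (∑ x, if P x then 1 else 0) * B ^ (∑ x, if P x then 0 else 1) := by
  rw [← Finset.prod_pow_eq_pow_sum, ← Finset.prod_pow_eq_pow_sum, ← Finset.prod_mul_distrib]
  refine Finset.prod_congr rfl fun x _ => ?_
  by_cases h : P x <;> simp [h]

open Finset in
lemma key_prod (k : Type*) [Field k] (l r i j : ℕ)
    (hr : 1 ≤ r) (hjl : j ≤ l)
    (b : Matrix (Fin l) (Fin l) k) (a : ℕ → Matrix (Fin l) (Fin l) k)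
    (X : Matrix (Fin l) (Fin i) k) (X' : Matrix (Fin l) (Fin j) k)
    (Y : Matrix (Fin i ⊕ Fin j) (Fin l) k) (t : k) (ts : ℕ → k)
    (σ : Equiv.Perm ((Fin i ⊕ Fin j) ⊕ Fin r × Fin l))
    (H : ∀ x, NN k l r i j b a X X' Y (σ x) x ≠ 0) :
    (∏ x, ccc t ts (σ x) x)
      = t ^ i * (∏ s ∈ Finset.range (r + 1), ts (2 * s + 1) ^ j) *
        (∏ s ∈ Finset.range r, ts (2 * s + 2) ^ (l - j)) := by
  classical
  -- structural consequences of H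
  have h1 : ∀ ci : Fin i, ∃ ρ, σ (Sum.inl (Sum.inl ci)) = Sum.inl ρ := by
    intro ci
    have hH := H (Sum.inl (Sum.inl ci))
    rcases hx : σ (Sum.inl (Sum.inl ci)) with ρ | ⟨u, p⟩
    · exact ⟨ρ, rfl⟩
    · rw [hx] at hH; simp [NN] at hH
  have h2 : ∀ cj : Fin j, ∃ u p, σ (Sum.inl (Sum.inr cj)) = Sum.inr (u, p) ∧ (u : ℕ) = r - 1 := by
    intro cj
    have hH := H (Sum.inl (Sum.inr cj))
    rcases hx : σ (Sum.inl (Sum.inr cj)) with ρ | ⟨u, p⟩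
    · rw [hx] at hH; simp [NN] at hH
    · refine ⟨u, p, rfl, ?_⟩
      rw [hx] at hH
      by_contra hc
      simp [NN, hc] at hH
  have h3 : ∀ (s : Fin r) (q : Fin l) ρ, σ (Sum.inr (s, q)) = Sum.inl ρ → (s : ℕ) = 0 := by
    intro s q ρ hx
    have hH := H (Sum.inr (s, q))
    rw [hx] at hH
    by_contra hc
    simp [NN, hc] at hH
  have h4 : ∀ (s : Fin r) (q : Fin l) (u : Fin r) (p : Fin l),
      σ (Sum.inr (s, q)) = Sum.inr (u, p) → s = u ∨ (s : ℕ) = (u : ℕ) + 1 := by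
    intro s q u p hx
    have hH := H (Sum.inr (s, q))
    rw [hx] at hH
    by_contra hc
    push_neg at hc
    simp [NN, hc.1, hc.2] at hH
  -- counting functions
  set f : Fin r → ℕ → ℕ :=
    fun s v => ∑ q : Fin l, if rIdx (σ (Sum.inr (s, q))) = v then 1 else 0 with hf
  have count : ∀ v : ℕ,
      (∑ x, if rIdx (σ x) = v then 1 else 0)
        = ∑ x : (Fin i ⊕ Fin j) ⊕ Fin r × Fin l, if rIdx x = v then 1 else 0 :=
    fun v => Equiv.sum_comp σ (fun x => if rIdx x = v then 1 else 0)
  have split : ∀ g : ((Fin i ⊕ Fin j) ⊕ Fin r × Fin l) → ℕ,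
      (∑ x, g x) = ((∑ ci : Fin i, g (Sum.inl (Sum.inl ci)))
        + ∑ cj : Fin j, g (Sum.inl (Sum.inr cj)))
        + ∑ s : Fin r, ∑ q : Fin l, g (Sum.inr (s, q)) := by
    intro g
    rw [Fintype.sum_sum_type, Fintype.sum_sum_type, Fintype.sum_prod_type]
  have rhs0 : (∑ x : (Fin i ⊕ Fin j) ⊕ Fin r × Fin l, if rIdx x = 0 then 1 else 0)
      = i + j := by
    rw [split]
    simp [rIdx]
  have rhsu : ∀ u : Fin r,
      (∑ x : (Fin i ⊕ Fin j) ⊕ Fin r × Fin l, if rIdx x = (u : ℕ) + 1 then 1 else 0) = l := by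
    intro u
    rw [split]
    simp [rIdx, Fin.val_inj, Finset.sum_ite_eq']
  have hρ0 : ∀ ci : Fin i, rIdx (σ (Sum.inl (Sum.inl ci))) = 0 := by
    intro ci
    obtain ⟨ρ, hρ⟩ := h1 ci
    rw [hρ]
    rfl
  have hρj : ∀ cj : Fin j, rIdx (σ (Sum.inl (Sum.inr cj))) = r - 1 + 1 := by
    intro cj
    obtain ⟨u, p, hup, hu⟩ := h2 cj
    rw [hup]
    simp [rIdx, hu]
  have p1 : (∑ ci : Fin i, if rIdx (σ (Sum.inl (Sum.inl ci))) = 0 then 1 else 0) = i := by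
    simp [hρ0]
  have p1' : ∀ u : Fin r,
      (∑ ci : Fin i, if rIdx (σ (Sum.inl (Sum.inl ci))) = (u : ℕ) + 1 then 1 else 0) = 0 := by
    intro u
    simp [hρ0]
  have p2 : (∑ cj : Fin j, if rIdx (σ (Sum.inl (Sum.inr cj))) = 0 then 1 else 0) = 0 := by
    simp [hρj]
  have p2' : ∀ u : Fin r,
      (∑ cj : Fin j, if rIdx (σ (Sum.inl (Sum.inr cj))) = (u : ℕ) + 1 then 1 else 0)
        = if (u : ℕ) = r - 1 then j else 0 := by
    intro u
    have : ∀ cj : Fin j,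
        (if rIdx (σ (Sum.inl (Sum.inr cj))) = (u : ℕ) + 1 then 1 else 0)
          = if (u : ℕ) = r - 1 then 1 else 0 := by
      intro cj
      rw [hρj cj]
      by_cases h : (u : ℕ) = r - 1
      · rw [if_pos (by omega), if_pos h]
      · rw [if_neg (by omega), if_neg h]
    rw [Finset.sum_congr rfl (fun cj _ => this cj)]
    by_cases h : (u : ℕ) = r - 1 <;> simp [h]
  have p5 : ∀ s : Fin r, (s : ℕ) ≠ 0 → f s 0 = 0 := by
    intro s hs
    simp only [hf]
    apply Finset.sum_eq_zero
    intro q _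
    rcases hx : σ (Sum.inr (s, q)) with ρ | ⟨w, p⟩
    · exact absurd (h3 s q ρ hx) hs
    · simp [rIdx]
  have p6 : ∀ (u s : Fin r), s ≠ u → (s : ℕ) ≠ (u : ℕ) + 1 → f s ((u : ℕ) + 1) = 0 := by
    intro u s hs1 hs2
    simp only [hf]
    apply Finset.sum_eq_zero
    intro q _
    rcases hx : σ (Sum.inr (s, q)) with ρ | ⟨w, p⟩
    · simp [rIdx]
    · rw [show rIdx (Sum.inr (w, p) : (Fin i ⊕ Fin j) ⊕ Fin r × Fin l) = (w : ℕ) + 1 from rfl]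
      rw [if_neg]
      intro hcond
      have hw : w = u := Fin.ext (by omega)
      subst hw
      rcases h4 s q w p hx with h | h
      · exact hs1 h
      · exact hs2 h
  -- the off-diagonal counts
  set offd : Fin r → ℕ :=
    (fun s => ∑ q : Fin l, if rIdx (σ (Sum.inr (s, q))) = (s : ℕ) + 1 then 0 else 1)
    with hoffd
  have Q1 : ∀ s : Fin r, f s ((s : ℕ) + 1) + offd s = l := by
    intro s
    simp only [hf, hoffd]
    rw [← Finset.sum_add_distrib]
    have : ∀ q : Fin l,
        ((if rIdx (σ (Sum.inr (s, q))) = (s : ℕ) + 1 then 1 else 0)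
          + if rIdx (σ (Sum.inr (s, q))) = (s : ℕ) + 1 then 0 else 1) = 1 := by
      intro q
      by_cases h : rIdx (σ (Sum.inr (s, q))) = (s : ℕ) + 1 <;> simp [h]
    rw [Finset.sum_congr rfl (fun q _ => this q)]
    simp
  have Q2 : offd ⟨0, hr⟩ = f ⟨0, hr⟩ 0 := by
    simp only [hf, hoffd]
    refine Finset.sum_congr rfl fun q _ => ?_
    rcases hx : σ (Sum.inr (⟨0, hr⟩, q)) with ρ | ⟨w, p⟩
    · simp [rIdx]
    · simp only [rIdx]
      rcases h4 _ q w p hx with h | h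
      · rw [← h]
        simp
      · simp only [Fin.val_mk] at h
        omega
  have Q3 : ∀ (u s : Fin r), (s : ℕ) = (u : ℕ) + 1 → offd s = f s ((u : ℕ) + 1) := by
    intro u s hsu
    simp only [hf, hoffd]
    refine Finset.sum_congr rfl fun q _ => ?_
    rcases hx : σ (Sum.inr (s, q)) with ρ | ⟨w, p⟩
    · have := h3 s q ρ hx
      omega
    · rw [show rIdx (Sum.inr (w, p) : (Fin i ⊕ Fin j) ⊕ Fin r × Fin l) = (w : ℕ) + 1 from rfl]
      rcases h4 s q w p hx with h | h
      · have : (s : ℕ) = (w : ℕ) := by rw [h]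
        split_ifs <;> omega
      · split_ifs <;> omega
  -- the equation from the block `R₀` of rows
  have M0 : f ⟨0, hr⟩ 0 = j := by
    have e := count 0
    rw [split (fun x => if rIdx (σ x) = 0 then 1 else 0), rhs0, p1, p2] at e
    have hsum : (∑ s : Fin r, f s 0) = f ⟨0, hr⟩ 0 := by
      refine Finset.sum_eq_single ⟨0, hr⟩ (fun s _ hs => p5 s ?_) (fun h => absurd (Finset.mem_univ _) h)
      intro h0
      exact hs (Fin.ext h0)
    have e' : (∑ s : Fin r, ∑ q : Fin l, if rIdx (σ (Sum.inr (s, q))) = 0 then 1 else 0)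
        = ∑ s : Fin r, f s 0 := by
      simp only [hf]
    rw [e', hsum] at e
    omega
  -- the equation from the block `R_{u+1}` of rows
  have Msum : ∀ u : Fin r,
      ((0 + if (u : ℕ) = r - 1 then j else 0) + ∑ s : Fin r, f s ((u : ℕ) + 1)) = l := by
    intro u
    have e := count ((u : ℕ) + 1)
    rw [split (fun x => if rIdx (σ x) = (u : ℕ) + 1 then 1 else 0), rhsu u, p1' u, p2' u] at e
    have e' : (∑ s : Fin r, ∑ q : Fin l, if rIdx (σ (Sum.inr (s, q))) = (u : ℕ) + 1 then 1 else 0)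
        = ∑ s : Fin r, f s ((u : ℕ) + 1) := by
      simp only [hf]
    rw [e'] at e
    exact e
  -- the main induction: the diagonal counts are all `l - j`
  have main : ∀ n, ∀ hn : n < r, f ⟨n, hn⟩ (n + 1) = l - j := by
    intro n
    induction n with
    | zero =>
      intro hn
      have h0 : (⟨0, hn⟩ : Fin r) = ⟨0, hr⟩ := rfl
      rw [h0]
      have q1 := Q1 ⟨0, hr⟩
      simp only [Fin.val_mk] at q1
      omega
    | succ n ih =>
      intro hn
      have hn' : n < r := by omega
      have ihu := ih hn'
      have hne : (⟨n, hn'⟩ : Fin r) ≠ ⟨n + 1, hn⟩ := by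
        intro h
        have := Fin.mk.injEq .. ▸ h
        simp at this
      have hsum : (∑ s : Fin r, f s (n + 1))
          = f ⟨n, hn'⟩ (n + 1) + f ⟨n + 1, hn⟩ (n + 1) := by
        refine Finset.sum_eq_add_of_mem _ _ (Finset.mem_univ _) (Finset.mem_univ _) hne ?_
        intro c _ hc
        have := p6 ⟨n, hn'⟩ c hc.1 ?_
        · simpa using this
        · intro hcv
          exact hc.2 (Fin.ext (by simpa using hcv))
      have msum := Msum ⟨n, hn'⟩
      simp only [Fin.val_mk] at msum
      rw [if_neg (by omega), hsum] at msum
      have q3 := Q3 ⟨n, hn'⟩ ⟨n + 1, hn⟩ rfl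
      simp only [Fin.val_mk] at q3
      have q1 := Q1 ⟨n + 1, hn⟩
      simp only [Fin.val_mk] at q1
      omega
  have offd_eq : ∀ s : Fin r, offd s = j := by
    intro s
    have hm := main (s : ℕ) s.isLt
    have hse : (⟨(s : ℕ), s.isLt⟩ : Fin r) = s := Fin.eta s s.isLt
    rw [hse] at hm
    have q1 := Q1 s
    omega
  have fdiag : ∀ s : Fin r, f s ((s : ℕ) + 1) = l - j := by
    intro s
    have hm := main (s : ℕ) s.isLt
    have hse : (⟨(s : ℕ), s.isLt⟩ : Fin r) = s := Fin.eta s s.isLt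
    rw [hse] at hm
    exact hm
  -- now compute the product
  rw [Fintype.prod_sum_type, Fintype.prod_sum_type, Fintype.prod_prod_type]
  have c1 : (∏ ci : Fin i, ccc t ts (σ (Sum.inl (Sum.inl ci))) (Sum.inl (Sum.inl ci))) = t ^ i := by
    simp [ccc_inl_inl]
  have c2 : (∏ cj : Fin j, ccc t ts (σ (Sum.inl (Sum.inr cj))) (Sum.inl (Sum.inr cj)))
      = ts (2 * r + 1) ^ j := by
    simp [ccc_inl_inr]
  have c3 : ∀ s : Fin r,
      (∏ q : Fin l, ccc t ts (σ (Sum.inr (s, q))) (Sum.inr (s, q)))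
        = ts (2 * (s : ℕ) + 2) ^ (l - j) * ts (2 * (s : ℕ) + 1) ^ j := by
    intro s
    have : ∀ q : Fin l, ccc t ts (σ (Sum.inr (s, q))) (Sum.inr (s, q))
        = if rIdx (σ (Sum.inr (s, q))) = (s : ℕ) + 1
            then ts (2 * (s : ℕ) + 2) else ts (2 * (s : ℕ) + 1) :=
      fun q => ccc_inr t ts _ s q
    rw [Finset.prod_congr rfl (fun q _ => this q), prod_ite_count]
    have e1 : (∑ q : Fin l, if rIdx (σ (Sum.inr (s, q))) = (s : ℕ) + 1 then 1 else 0)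
        = l - j := fdiag s
    have e2 : (∑ q : Fin l, if rIdx (σ (Sum.inr (s, q))) = (s : ℕ) + 1 then 0 else 1)
        = j := offd_eq s
    rw [e1, e2]
  rw [c1, c2, Finset.prod_congr rfl (fun s _ => c3 s), Finset.prod_mul_distrib]
  rw [Fin.prod_univ_eq_prod_range (fun n => ts (2 * n + 2) ^ (l - j)) r,
    Fin.prod_univ_eq_prod_range (fun n => ts (2 * n + 1) ^ j) r,
    Finset.prod_range_succ]
  ring

theorem stmt8 (k : Type*) [Field k] (l r i j : ℕ)
    (hl : 1 ≤ l) (hr : 1 ≤ r) (hi : 1 ≤ i) (hj : 1 ≤ j) (hjl : j ≤ l)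
    (b : Matrix (Fin l) (Fin l) k) (a : ℕ → Matrix (Fin l) (Fin l) k)
    (X : Matrix (Fin l) (Fin i) k) (X' : Matrix (Fin l) (Fin j) k)
    (Y : Matrix (Fin i ⊕ Fin j) (Fin l) k)
    (t : k) (ts : ℕ → k) :
    (NN k l r i j (t • b) (fun q => ts q • a q) X X' Y).det =
      t ^ i * (∏ s ∈ Finset.range (r + 1), ts (2 * s + 1) ^ j) *
        (∏ s ∈ Finset.range r, ts (2 * s + 2) ^ (l - j)) *
        (NN k l r i j b a X X' Y).det := by
  classical
  rw [Matrix.det_apply', Matrix.det_apply', Finset.mul_sum]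
  refine Finset.sum_congr rfl fun σ _ => ?_
  by_cases hσ : ∀ x, NN k l r i j b a X X' Y (σ x) x ≠ 0
  · have hprod := key_prod k l r i j hr hjl b a X X' Y t ts σ hσ
    have : ∀ x ∈ Finset.univ, NN k l r i j (t • b) (fun q => ts q • a q) X X' Y (σ x) x
        = ccc t ts (σ x) x * NN k l r i j b a X X' Y (σ x) x :=
      fun x _ => NN_smul_entry k l r i j b a X X' Y t ts (σ x) x
    rw [Finset.prod_congr rfl this, Finset.prod_mul_distrib, hprod]
    ring
  · push_neg at hσ
    obtain ⟨x0, hx0⟩ := hσ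
    have z1 : (∏ x, NN k l r i j (t • b) (fun q => ts q • a q) X X' Y (σ x) x) = 0 := by
      apply Finset.prod_eq_zero (Finset.mem_univ x0)
      rw [NN_smul_entry, hx0, mul_zero]
    have z2 : (∏ x, NN k l r i j b a X X' Y (σ x) x) = 0 :=
      Finset.prod_eq_zero (Finset.mem_univ x0) hx0
    rw [z1, z2]
    ring
end
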